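/- arXiv:2501.07863 — 8 statements merged into one kernel-verified Lean document; each statement's English description precedes it below -/
import Mathlib

section
/- Let C₁, C₂ ⊆ ℝⁿ be nonempty closed convex sets. For any x ∈ ℝⁿ and any ρ ≥ ‖x‖ + d(x, C₁) + d(x, C₂), one has ‖proj_{C₁}(x) - proj_{C₂}(x)‖² ≤ ρ · max{ sup_{p ∈ C₁} d(p, C₂), sup_{q ∈ C₂} d(q, C₁) }, provided the right-hand side suprema are finite. -/
open Metric

open scoped RealInnerProductSpace

lemma proj_inner_aux {E : Type*} [NormedAddCommGroup E] [InnerProductSpace ℝ E]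
    {C : Set E} (hC : Convex ℝ C) {x p : E} (hp : p ∈ C)
    (hmin : ∀ y ∈ C, ‖p - x‖ ≤ ‖y - x‖) {z : E} (hz : z ∈ C) :
    ⟪x - p, z - p⟫ ≤ 0 := by
  haveI : Nonempty C := ⟨⟨p, hp⟩⟩
  have hnorm : ‖x - p‖ = ⨅ w : C, ‖x - w‖ := by
    apply le_antisymm
    · exact le_ciInf fun w => by
        rw [norm_sub_rev x p, norm_sub_rev x (w : E)]; exact hmin w w.2
    · exact ciInf_le ⟨0, Set.forall_mem_range.2 fun w => norm_nonneg _⟩ (⟨p, hp⟩ : C)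
  exact (norm_eq_iInf_iff_real_inner_le_zero hC hp).1 hnorm z hz

theorem stmt_2 (n : ℕ) (C₁ C₂ : Set (EuclideanSpace ℝ (Fin n)))
    (hne₁ : C₁.Nonempty) (hne₂ : C₂.Nonempty)
    (hcl₁ : IsClosed C₁) (hcl₂ : IsClosed C₂)
    (hconv₁ : Convex ℝ C₁) (hconv₂ : Convex ℝ C₂)
    (x p₁ p₂ : EuclideanSpace ℝ (Fin n))
    (hp₁ : p₁ ∈ C₁) (hp₁min : ∀ y ∈ C₁, ‖p₁ - x‖ ≤ ‖y - x‖)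
    (hp₂ : p₂ ∈ C₂) (hp₂min : ∀ y ∈ C₂, ‖p₂ - x‖ ≤ ‖y - x‖)
    (hbdd₁ : BddAbove (Set.range fun p : C₁ => infDist (p : EuclideanSpace ℝ (Fin n)) C₂))
    (hbdd₂ : BddAbove (Set.range fun q : C₂ => infDist (q : EuclideanSpace ℝ (Fin n)) C₁))
    (ρ : ℝ) (hρ : ‖x‖ + infDist x C₁ + infDist x C₂ ≤ ρ) :
    ‖p₁ - p₂‖ ^ 2 ≤ ρ *
      max (⨆ p : C₁, infDist (p : EuclideanSpace ℝ (Fin n)) C₂)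
          (⨆ q : C₂, infDist (q : EuclideanSpace ℝ (Fin n)) C₁) := by
  set H := max (⨆ p : C₁, infDist (p : EuclideanSpace ℝ (Fin n)) C₂)
      (⨆ q : C₂, infDist (q : EuclideanSpace ℝ (Fin n)) C₁) with hHdef
  obtain ⟨w, hw, hwd⟩ := hcl₂.exists_infDist_eq_dist hne₂ p₁
  obtain ⟨z, hz, hzd⟩ := hcl₁.exists_infDist_eq_dist hne₁ p₂
  have hH1 : infDist p₁ C₂ ≤ H :=
    le_trans (le_ciSup hbdd₁ ⟨p₁, hp₁⟩) (le_max_left _ _)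
  have hH2 : infDist p₂ C₁ ≤ H :=
    le_trans (le_ciSup hbdd₂ ⟨p₂, hp₂⟩) (le_max_right _ _)
  have hH0 : 0 ≤ H := le_trans infDist_nonneg hH1
  -- norms of residuals equal infDists
  have hnx1 : ‖p₁ - x‖ = infDist x C₁ := by
    apply le_antisymm
    · by_contra hlt
      obtain ⟨y, hy, hdy⟩ := (infDist_lt_iff hne₁).1 (lt_of_not_ge hlt)
      rw [dist_eq_norm, norm_sub_rev] at hdy
      exact absurd (hp₁min y hy) (not_le.2 hdy)
    · calc infDist x C₁ ≤ dist x p₁ := infDist_le_dist_of_mem hp₁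
        _ = ‖p₁ - x‖ := by rw [dist_eq_norm, norm_sub_rev]
  have hnx2 : ‖x - p₂‖ = infDist x C₂ := by
    rw [norm_sub_rev]
    apply le_antisymm
    · by_contra hlt
      obtain ⟨y, hy, hdy⟩ := (infDist_lt_iff hne₂).1 (lt_of_not_ge hlt)
      rw [dist_eq_norm, norm_sub_rev] at hdy
      exact absurd (hp₂min y hy) (not_le.2 hdy)
    · calc infDist x C₂ ≤ dist x p₂ := infDist_le_dist_of_mem hp₂
        _ = ‖p₂ - x‖ := by rw [dist_eq_norm, norm_sub_rev]
  have hzn : ‖z - p₂‖ ≤ H := by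
    rw [norm_sub_rev, ← dist_eq_norm, ← hzd]; exact hH2
  have hwn : ‖p₁ - w‖ ≤ H := by
    rw [← dist_eq_norm, ← hwd]; exact hH1
  have e1 : (p₁ - z) + (z - p₂) = p₁ - p₂ := by abel
  have e2 : (p₁ - w) + (w - p₂) = p₁ - p₂ := by abel
  have e3 : (p₁ - x) + (x - p₂) = p₁ - p₂ := by abel
  have key : ‖p₁ - p₂‖ ^ 2 =
      (⟪p₁ - x, p₁ - z⟫ + ⟪p₁ - x, z - p₂⟫) + (⟪x - p₂, p₁ - w⟫ + ⟪x - p₂, w - p₂⟫) := by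
    calc ‖p₁ - p₂‖ ^ 2 = ⟪p₁ - p₂, p₁ - p₂⟫ := (real_inner_self_eq_norm_sq _).symm
      _ = ⟪p₁ - x, p₁ - p₂⟫ + ⟪x - p₂, p₁ - p₂⟫ := by rw [← inner_add_left, e3]
      _ = (⟪p₁ - x, p₁ - z⟫ + ⟪p₁ - x, z - p₂⟫) + (⟪x - p₂, p₁ - w⟫ + ⟪x - p₂, w - p₂⟫) := by
          rw [← inner_add_right, ← inner_add_right, e1, e2]
  have t1 : ⟪p₁ - x, p₁ - z⟫ ≤ 0 := by
    have h := proj_inner_aux hconv₁ hp₁ hp₁min hz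
    rw [show p₁ - x = -(x - p₁) by abel, show p₁ - z = -(z - p₁) by abel, inner_neg_neg]
    exact h
  have t4 : ⟪x - p₂, w - p₂⟫ ≤ 0 := proj_inner_aux hconv₂ hp₂ hp₂min hw
  have t2 : ⟪p₁ - x, z - p₂⟫ ≤ ‖p₁ - x‖ * H := by
    calc ⟪p₁ - x, z - p₂⟫ ≤ ‖p₁ - x‖ * ‖z - p₂‖ := real_inner_le_norm _ _
      _ ≤ ‖p₁ - x‖ * H := mul_le_mul_of_nonneg_left hzn (norm_nonneg _)
  have t3 : ⟪x - p₂, p₁ - w⟫ ≤ ‖x - p₂‖ * H := by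
    calc ⟪x - p₂, p₁ - w⟫ ≤ ‖x - p₂‖ * ‖p₁ - w‖ := real_inner_le_norm _ _
      _ ≤ ‖x - p₂‖ * H := mul_le_mul_of_nonneg_left hwn (norm_nonneg _)
  have hsum : infDist x C₁ + infDist x C₂ ≤ ρ := by
    have := norm_nonneg x; linarith
  calc ‖p₁ - p₂‖ ^ 2
      = (⟪p₁ - x, p₁ - z⟫ + ⟪p₁ - x, z - p₂⟫) + (⟪x - p₂, p₁ - w⟫ + ⟪x - p₂, w - p₂⟫) := key
    _ ≤ (‖p₁ - x‖ + ‖x - p₂‖) * H := by nlinarith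
    _ = (infDist x C₁ + infDist x C₂) * H := by rw [hnx1, hnx2]
    _ ≤ ρ * H := mul_le_mul_of_nonneg_right hsum hH0
end

section
/- Let φ : ℝᵐ → ℝ be the convex quadratic φ(λ) = (1/2)‖Aλ - c‖² with A an n×m matrix and c ∈ ℝⁿ, and let Δ_m be the unit simplex. Suppose λ* minimizes φ(λ) + ⟨λ, e⟩ over Δ_m and μ* minimizes φ over Δ_m, where e ∈ ℝᵐ. Then ‖Aλ* - Aμ*‖² ≤ 2⟨e, μ* - λ*⟩ ≤ 4‖e‖_∞. -/
set_option maxHeartbeats 1000000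


theorem stmt_4 (n m : ℕ)
    (A : (Fin m → ℝ) →ₗ[ℝ] EuclideanSpace ℝ (Fin n))
    (c : EuclideanSpace ℝ (Fin n)) (e : Fin m → ℝ)
    (φ : (Fin m → ℝ) → ℝ)
    (hφ : ∀ lam, φ lam = (1 / 2) * ‖A lam - c‖ ^ 2)
    (lamStar muStar : Fin m → ℝ)
    (hlam : lamStar ∈ stdSimplex ℝ (Fin m))
    (hmu : muStar ∈ stdSimplex ℝ (Fin m))
    (hlamMin : ∀ lam ∈ stdSimplex ℝ (Fin m),
      φ lamStar + ∑ j, lamStar j * e j ≤ φ lam + ∑ j, lam j * e j)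
    (hmuMin : ∀ lam ∈ stdSimplex ℝ (Fin m), φ muStar ≤ φ lam) :
    ‖A lamStar - A muStar‖ ^ 2 ≤ 2 * ∑ j, e j * (muStar j - lamStar j) ∧
      2 * ∑ j, e j * (muStar j - lamStar j) ≤ 4 * ‖e‖ := by
  set ν : Fin m → ℝ := (1/2 : ℝ) • lamStar + (1/2 : ℝ) • muStar with hν
  have hνmem : ν ∈ stdSimplex ℝ (Fin m) :=
    (convex_stdSimplex ℝ (Fin m)) hlam hmu (by norm_num) (by norm_num) (by norm_num)
  set a : EuclideanSpace ℝ (Fin n) := A lamStar with ha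
  set b : EuclideanSpace ℝ (Fin n) := A muStar with hb
  have hAν : A ν = (1/2 : ℝ) • a + (1/2 : ℝ) • b := by
    rw [hν, map_add, map_smul, map_smul]
  set x : EuclideanSpace ℝ (Fin n) := a - c with hx
  set y : EuclideanSpace ℝ (Fin n) := b - c with hy
  have hνsub : A ν - c = (1/2 : ℝ) • (x + y) := by
    rw [hAν, hx, hy]
    module
  have hnν : ‖A ν - c‖ = (1/2) * ‖x + y‖ := by
    rw [hνsub, norm_smul]
    norm_num
  have hpar : ‖x + y‖ * ‖x + y‖ + ‖x - y‖ * ‖x - y‖ = 2 * (‖x‖ * ‖x‖ + ‖y‖ * ‖y‖) :=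
    by have h := parallelogram_law_with_norm ℝ x y; simp only [pow_two] at h; exact h
  have hab : a - b = x - y := by rw [hx, hy]; abel
  -- sum over ν
  have hsumν : ∑ j, ν j * e j =
      (1/2) * (∑ j, lamStar j * e j) + (1/2) * (∑ j, muStar j * e j) := by
    rw [Finset.mul_sum, Finset.mul_sum, ← Finset.sum_add_distrib]
    refine Finset.sum_congr rfl fun j _ => ?_
    simp [hν]
    ring
  have h1 := hlamMin ν hνmem
  have h2 := hmuMin ν hνmem
  rw [hφ, hφ] at h1
  rw [hφ, hφ] at h2
  rw [hnν] at h1 h2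
  have hS : ∑ j, e j * (muStar j - lamStar j) =
      (∑ j, muStar j * e j) - (∑ j, lamStar j * e j) := by
    rw [← Finset.sum_sub_distrib]
    refine Finset.sum_congr rfl fun j _ => by ring
  constructor
  · rw [hab, hS]
    rw [hsumν] at h1
    nlinarith [sq_nonneg (‖x - y‖), norm_nonneg (x - y)]
  · have hbound : ∀ j ∈ Finset.univ, e j * (muStar j - lamStar j) ≤
        ‖e‖ * (muStar j + lamStar j) := by
      intro j _
      have h1 : |e j| ≤ ‖e‖ := by
        have := norm_le_pi_norm e j
        rwa [Real.norm_eq_abs] at this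
      have h2 : |muStar j - lamStar j| ≤ muStar j + lamStar j := by
        rw [abs_sub_le_iff]
        constructor <;> linarith [hmu.1 j, hlam.1 j]
      have h3 : e j * (muStar j - lamStar j) ≤ |e j| * |muStar j - lamStar j| := by
        rw [← abs_mul]; exact le_abs_self _
      nlinarith [abs_nonneg (e j), abs_nonneg (muStar j - lamStar j)]
    have hsum := Finset.sum_le_sum hbound
    have heq : ∑ j, ‖e‖ * (muStar j + lamStar j) = 2 * ‖e‖ := by
      have h4 : ∑ j, (muStar j + lamStar j) = 2 := by
        rw [Finset.sum_add_distrib, hmu.2, hlam.2]; norm_num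
      rw [← Finset.mul_sum, h4]; ring
    rw [heq] at hsum
    linarith
end

section
/- Let F = (f₁,…,f_m) : ℝⁿ → ℝᵐ be continuous and suppose the level set L_{f_{j₀}}(α) = {x : f_{j₀}(x) ≤ α} is bounded for some index j₀ and every α ∈ ℝ. Fix β ∈ ℝᵐ with L_F(β) = {x : F(x) ≤ β componentwise} nonempty. Then sup over F* in the image of the weak Pareto set intersected with L_F(β) of inf_{z ∈ F^{-1}(F*)} ‖z‖ is finite. -/
/-- `x` is weakly Pareto optimal for the objectives `f j`. -/
def WeakPareto {n m : ℕ} (f : Fin m → EuclideanSpace ℝ (Fin n) → ℝ)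
    (x : EuclideanSpace ℝ (Fin n)) : Prop :=
  ¬ ∃ y : EuclideanSpace ℝ (Fin n), ∀ j, f j y < f j x

theorem stmt_9 (n m : ℕ)
    (f : Fin m → EuclideanSpace ℝ (Fin n) → ℝ)
    (hcont : ∀ j, Continuous (f j))
    (j₀ : Fin m)
    (hlev : ∀ α : ℝ, Bornology.IsBounded {x : EuclideanSpace ℝ (Fin n) | f j₀ x ≤ α})
    (β : Fin m → ℝ)
    (hne : ({x : EuclideanSpace ℝ (Fin n) | ∀ j, f j x ≤ β j}).Nonempty) :
    ∃ B : ℝ, ∀ zs : EuclideanSpace ℝ (Fin n),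
      WeakPareto f zs → (∀ j, f j zs ≤ β j) →
        sInf {r : ℝ | ∃ z : EuclideanSpace ℝ (Fin n), (∀ j, f j z = f j zs) ∧ r = ‖z‖} ≤ B := by
  obtain ⟨R, hR⟩ := (hlev (β j₀)).subset_closedBall 0
  refine ⟨R, fun zs _ hβ => ?_⟩
  have hmem : ‖zs‖ ∈ {r : ℝ | ∃ z : EuclideanSpace ℝ (Fin n),
      (∀ j, f j z = f j zs) ∧ r = ‖z‖} := ⟨zs, fun j => rfl, rfl⟩
  have hbdd : BddBelow {r : ℝ | ∃ z : EuclideanSpace ℝ (Fin n),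
      (∀ j, f j z = f j zs) ∧ r = ‖z‖} :=
    ⟨0, fun r ⟨z, _, hr⟩ => hr ▸ norm_nonneg z⟩
  calc sInf _ ≤ ‖zs‖ := csInf_le hbdd hmem
    _ ≤ R := by simpa using hR (hβ j₀)
end

section
/- Let F = (f₁,…,f_m) with each fⱼ convex and differentiable, and let β ∈ ℝᵐ with L_F(β) nonempty. Assume that for every x ∈ L_F(β) there exists a weakly Pareto optimal x* with F(x*) ≤ F(x). Then for all x ∈ L_F(β), the merit function u₀(x) = sup_{z ∈ ℝⁿ} min_{1≤j≤m}[fⱼ(x) - fⱼ(z)] satisfies u₀(x) = sup_{F* ∈ F(P_w ∩ L_F(β))} inf_{z ∈ F^{-1}(F*)} min_{1≤j≤m}[fⱼ(x) - fⱼ(z)]. -/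
theorem stmt_10 (n m : ℕ) (hm : (Finset.univ : Finset (Fin m)).Nonempty)
    (f : Fin m → EuclideanSpace ℝ (Fin n) → ℝ)
    (hconv : ∀ j, ConvexOn ℝ Set.univ (f j))
    (hdiff : ∀ j, Differentiable ℝ (f j))
    (β : Fin m → ℝ)
    (hne : ({x : EuclideanSpace ℝ (Fin n) | ∀ j, f j x ≤ β j}).Nonempty)
    (hpw : ∀ x : EuclideanSpace ℝ (Fin n), (∀ j, f j x ≤ β j) →
      ∃ xs : EuclideanSpace ℝ (Fin n), WeakPareto f xs ∧ ∀ j, f j xs ≤ f j x) :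
    ∀ x : EuclideanSpace ℝ (Fin n), (∀ j, f j x ≤ β j) →
      sSup {r : ℝ | ∃ z : EuclideanSpace ℝ (Fin n),
          r = Finset.univ.inf' hm fun j => f j x - f j z} =
      sSup {r : ℝ | ∃ zs : EuclideanSpace ℝ (Fin n),
          WeakPareto f zs ∧ (∀ j, f j zs ≤ β j) ∧
          r = sInf {s : ℝ | ∃ z : EuclideanSpace ℝ (Fin n),
              (∀ j, f j z = f j zs) ∧ s = Finset.univ.inf' hm fun j => f j x - f j z}} := by
  intro x hx
  set g : EuclideanSpace ℝ (Fin n) → ℝ :=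
    fun z => Finset.univ.inf' hm fun j => f j x - f j z with hg
  -- the inner sInf set is a singleton
  have hinner : ∀ zs : EuclideanSpace ℝ (Fin n),
      sInf {s : ℝ | ∃ z : EuclideanSpace ℝ (Fin n),
          (∀ j, f j z = f j zs) ∧ s = Finset.univ.inf' hm fun j => f j x - f j z} = g zs := by
    intro zs
    have hset : {s : ℝ | ∃ z : EuclideanSpace ℝ (Fin n),
        (∀ j, f j z = f j zs) ∧ s = Finset.univ.inf' hm fun j => f j x - f j z}
        = {g zs} := by
      ext s
      simp only [Set.mem_setOf_eq, Set.mem_singleton_iff]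
      constructor
      · rintro ⟨z, hz, rfl⟩
        exact Finset.inf'_congr hm rfl (fun j _ => by rw [hz j])
      · rintro rfl; exact ⟨zs, fun j => rfl, rfl⟩
    rw [hset, csInf_singleton]
  have hS2 : {r : ℝ | ∃ zs : EuclideanSpace ℝ (Fin n),
      WeakPareto f zs ∧ (∀ j, f j zs ≤ β j) ∧
      r = sInf {s : ℝ | ∃ z : EuclideanSpace ℝ (Fin n),
          (∀ j, f j z = f j zs) ∧ s = Finset.univ.inf' hm fun j => f j x - f j z}}
      = {r : ℝ | ∃ zs : EuclideanSpace ℝ (Fin n),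
          WeakPareto f zs ∧ (∀ j, f j zs ≤ β j) ∧ r = g zs} := by
    ext r
    simp only [Set.mem_setOf_eq]
    constructor
    · rintro ⟨zs, h1, h2, rfl⟩; exact ⟨zs, h1, h2, (hinner zs).symm ▸ rfl⟩
    · rintro ⟨zs, h1, h2, rfl⟩; exact ⟨zs, h1, h2, (hinner zs).symm⟩
  rw [hS2]
  obtain ⟨xs, hxsP, hxsle⟩ := hpw x hx
  set M : ℝ := Finset.univ.sup' hm fun j => f j x - f j xs with hM
  -- global bound via weak Pareto optimality of xs
  have hbd : ∀ z : EuclideanSpace ℝ (Fin n), g z ≤ M := by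
    intro z
    by_contra h
    push_neg at h
    apply hxsP
    refine ⟨z, fun j => ?_⟩
    have h1 : g z ≤ f j x - f j z := Finset.inf'_le _ (Finset.mem_univ j)
    have h2 : f j x - f j xs ≤ M := Finset.le_sup' (fun j => f j x - f j xs) (Finset.mem_univ j)
    linarith
  have hbdd1 : BddAbove {r : ℝ | ∃ z : EuclideanSpace ℝ (Fin n), r = g z} :=
    ⟨M, by rintro r ⟨z, rfl⟩; exact hbd z⟩
  have hbdd2 : BddAbove {r : ℝ | ∃ zs : EuclideanSpace ℝ (Fin n),
      WeakPareto f zs ∧ (∀ j, f j zs ≤ β j) ∧ r = g zs} :=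
    ⟨M, by rintro r ⟨zs, _, _, rfl⟩; exact hbd zs⟩
  have hxsβ : ∀ j, f j xs ≤ β j := fun j => (hxsle j).trans (hx j)
  have hne2 : ({r : ℝ | ∃ zs : EuclideanSpace ℝ (Fin n),
      WeakPareto f zs ∧ (∀ j, f j zs ≤ β j) ∧ r = g zs}).Nonempty :=
    ⟨g xs, xs, hxsP, hxsβ, rfl⟩
  apply le_antisymm
  · have hne1 : ({r : ℝ | ∃ z : EuclideanSpace ℝ (Fin n), r = g z}).Nonempty := ⟨g x, x, rfl⟩
    apply csSup_le hne1
    rintro r ⟨z, rfl⟩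
    by_cases hzβ : ∀ j, f j z ≤ β j
    · obtain ⟨zs, hzsP, hzsle⟩ := hpw z hzβ
      have hgz : g z ≤ g zs := by
        apply Finset.le_inf'
        intro j _
        have h1 : g z ≤ f j x - f j z := Finset.inf'_le _ (Finset.mem_univ j)
        have := hzsle j
        linarith
      exact hgz.trans (le_csSup hbdd2 ⟨zs, hzsP, fun j => (hzsle j).trans (hzβ j), rfl⟩)
    · push_neg at hzβ
      obtain ⟨j, hj⟩ := hzβ
      have h1 : g z ≤ f j x - f j z := Finset.inf'_le _ (Finset.mem_univ j)
      have h2 : g z ≤ g xs := by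
        have h3 : (0:ℝ) ≤ g xs := by
          apply Finset.le_inf'
          intro i _
          have := hxsle i
          linarith
        have := hx j
        linarith
      exact h2.trans (le_csSup hbdd2 ⟨xs, hxsP, hxsβ, rfl⟩)
  · apply csSup_le hne2
    rintro r ⟨zs, _, _, rfl⟩
    exact le_csSup hbdd1 ⟨zs, rfl⟩
end

section
/- Let C = conv{p₁,…,p_m} ⊆ ℝⁿ, a > b ≥ 0, u, w ∈ ℝⁿ, and suppose x# ∈ ℝⁿ satisfies a·x# = u - proj_C(w - b·x#). Then x# = (u - v#)/a where v# = proj_C((a·w - b·u)/(a - b)). -/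
open scoped RealInnerProductSpace

lemma min_to_inner {F : Type*} [NormedAddCommGroup F] [InnerProductSpace ℝ F]
    {K : Set F} (h : Convex ℝ K) {y v : F} (hv : v ∈ K)
    (hmin : ∀ q ∈ K, ‖v - y‖ ≤ ‖q - y‖) :
    ∀ q ∈ K, (inner ℝ (y - v) (q - v) : ℝ) ≤ 0 := by
  haveI : Nonempty K := ⟨⟨v, hv⟩⟩
  rw [← norm_eq_iInf_iff_real_inner_le_zero h hv]
  refine le_antisymm (le_ciInf fun ⟨q, hq⟩ => ?_)
    (ciInf_le ⟨0, fun _ ⟨_, h⟩ => h ▸ norm_nonneg _⟩ (⟨v, hv⟩ : K))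
  rw [norm_sub_rev y v]
  simpa [norm_sub_rev] using hmin q hq

theorem stmt_13 (n m : ℕ) (p : Fin m → EuclideanSpace ℝ (Fin n))
    (a b : ℝ) (hb : 0 ≤ b) (hab : b < a)
    (u w xh v₁ vh : EuclideanSpace ℝ (Fin n))
    (hv₁ : v₁ ∈ convexHull ℝ (Set.range p))
    (hv₁min : ∀ q ∈ convexHull ℝ (Set.range p),
      ‖v₁ - (w - b • xh)‖ ≤ ‖q - (w - b • xh)‖)
    (heq : a • xh = u - v₁)
    (hvh : vh ∈ convexHull ℝ (Set.range p))
    (hvhmin : ∀ q ∈ convexHull ℝ (Set.range p),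
      ‖vh - (a - b)⁻¹ • (a • w - b • u)‖ ≤ ‖q - (a - b)⁻¹ • (a • w - b • u)‖) :
    xh = a⁻¹ • (u - vh) := by
  have ha : a ≠ 0 := by linarith
  have hab' : a - b ≠ 0 := by linarith
  set K := convexHull ℝ (Set.range p)
  have hK : Convex ℝ K := convex_convexHull ℝ _
  set y := w - b • xh with hy
  set z := (a - b)⁻¹ • (a • w - b • u) with hz
  have h1 : ∀ q ∈ K, (inner ℝ (y - v₁) (q - v₁) : ℝ) ≤ 0 := min_to_inner hK hv₁ hv₁min
  have h2 : ∀ q ∈ K, (inner ℝ (z - vh) (q - vh) : ℝ) ≤ 0 := min_to_inner hK hvh hvhmin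
  -- z - v₁ = (a/(a-b)) • (y - v₁)
  have hxh : xh = a⁻¹ • (u - v₁) := by
    rw [← heq, smul_smul, inv_mul_cancel₀ ha, one_smul]
  have hkey : z - v₁ = (a / (a - b)) • (y - v₁) := by
    rw [hz, hy, hxh]
    match_scalars <;> field_simp <;> ring
  have h1' : ∀ q ∈ K, (inner ℝ (z - v₁) (q - v₁) : ℝ) ≤ 0 := by
    intro q hq
    rw [hkey, real_inner_smul_left]
    exact mul_nonpos_of_nonneg_of_nonpos (div_nonneg (by linarith) (by linarith)) (h1 q hq)
  have hsum : (inner ℝ (z - v₁) (vh - v₁) : ℝ) + (inner ℝ (z - vh) (v₁ - vh) : ℝ) - ‖vh - v₁‖^2 = 0 := by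
    have e : ‖vh - v₁‖^2 = (inner ℝ (vh - v₁) (vh - v₁) : ℝ) := (real_inner_self_eq_norm_sq _).symm
    rw [e]
    simp only [inner_sub_left, inner_sub_right]
    rw [real_inner_comm vh v₁]
    ring
  have hvv : vh = v₁ := by
    have hA := h1' vh hvh
    have hB := h2 v₁ hv₁
    have : ‖vh - v₁‖^2 ≤ 0 := by linarith
    have hn : ‖vh - v₁‖ = 0 := by nlinarith [sq_nonneg ‖vh - v₁‖, norm_nonneg (vh - v₁)]
    exact sub_eq_zero.mp (norm_eq_zero.mp hn)
  rw [hvv]; exact hxh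
end

section
/- Let C = conv{p₁,…,p_m} ⊆ ℝⁿ, a > 0, u, w ∈ ℝⁿ, and suppose x# ∈ ℝⁿ satisfies a·x# = u - proj_C(w - a·x#). Then x# = (u - v#)/a for some v# ∈ argmin_{v ∈ C} ⟨v, u - w⟩. -/
open InnerProductSpace

theorem stmt_14 (n m : ℕ) (p : Fin m → EuclideanSpace ℝ (Fin n))
    (a : ℝ) (ha : 0 < a)
    (u w xh v₁ : EuclideanSpace ℝ (Fin n))
    (hv₁ : v₁ ∈ convexHull ℝ (Set.range p))
    (hv₁min : ∀ q ∈ convexHull ℝ (Set.range p),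
      ‖v₁ - (w - a • xh)‖ ≤ ‖q - (w - a • xh)‖)
    (heq : a • xh = u - v₁) :
    ∃ vh ∈ convexHull ℝ (Set.range p),
      (∀ v ∈ convexHull ℝ (Set.range p), ⟪vh, u - w⟫_ℝ ≤ ⟪v, u - w⟫_ℝ) ∧
      xh = a⁻¹ • (u - vh) := by
  haveI : Nonempty ↑(convexHull ℝ (Set.range p)) := ⟨⟨v₁, hv₁⟩⟩
  set x := w - a • xh with hx
  have hinf : ‖x - v₁‖ = ⨅ q : convexHull ℝ (Set.range p), ‖x - q‖ := by
    apply le_antisymm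
    · exact le_ciInf fun q => by
        rw [norm_sub_rev, norm_sub_rev x]; exact hv₁min q q.2
    · exact ciInf_le ⟨0, fun y ⟨q, hq⟩ => hq ▸ norm_nonneg _⟩ (⟨v₁, hv₁⟩ :
        convexHull ℝ (Set.range p))
  have hchar := (norm_eq_iInf_iff_real_inner_le_zero
    (convex_convexHull ℝ (Set.range p)) hv₁).mp hinf
  have hxv : x - v₁ = w - u := by
    rw [hx]
    have : a • xh + v₁ = u := by rw [heq]; abel
    rw [← this]; abel
  refine ⟨v₁, hv₁, fun v hv => ?_, ?_⟩
  · have h := hchar v hv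
    rw [hxv] at h
    have h2 : ⟪v - v₁, u - w⟫_ℝ ≥ 0 := by
      have : ⟪w - u, v - v₁⟫_ℝ = -⟪v - v₁, u - w⟫_ℝ := by
        rw [real_inner_comm, ← inner_neg_right, neg_sub]
      linarith [this ▸ h]
    rw [inner_sub_left] at h2
    linarith
  · rw [← heq, smul_smul, inv_mul_cancel₀ ha.ne', one_smul]
end

section
/- Define θ₀ = 1 and θ_k = [(1+τ₀)⋯(1+τ_{k-1})]^{-1} with τ_i = (γ_i + sqrt(γ_i² + 4Lγ_i))/(2L), γ_{i+1} = (γ_i + μτ_i)/(1+τ_i), γ₀ > 0, 0 ≤ μ ≤ L. Then θ_k ≤ min{ 4L/(2√L + √γ₀·k)², (1 + sqrt(min{μ,γ₀}/L))^{-k} } for all k ≥ 1. -/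
set_option maxHeartbeats 1000000


theorem stmt_16 (L μ γ₀ : ℝ) (hL : 0 < L) (hμ : 0 ≤ μ) (hμL : μ ≤ L) (hγ₀ : 0 < γ₀)
    (γ τ θ : ℕ → ℝ)
    (hγ0 : γ 0 = γ₀)
    (hτ : ∀ i, τ i = (γ i + Real.sqrt ((γ i) ^ 2 + 4 * L * γ i)) / (2 * L))
    (hγ : ∀ i, γ (i + 1) = (γ i + μ * τ i) / (1 + τ i))
    (hθ : ∀ k, θ k = (∏ i ∈ Finset.range k, (1 + τ i))⁻¹) :
    ∀ k : ℕ, 1 ≤ k →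
      θ k ≤ min (4 * L / (2 * Real.sqrt L + Real.sqrt γ₀ * k) ^ 2)
                ((1 + Real.sqrt (min μ γ₀ / L))⁻¹ ^ k) := by
  intro k _
  set m := min μ γ₀ with hm
  have hm0 : 0 ≤ m := le_min hμ hγ₀.le
  have hmμ : m ≤ μ := min_le_left _ _
  set P : ℕ → ℝ := fun n => ∏ i ∈ Finset.range n, (1 + τ i) with hPdef
  -- positivity and lower bound of γ
  have hγpos : ∀ i, 0 < γ i ∧ m ≤ γ i := by
    intro i
    induction i with
    | zero => rw [hγ0]; exact ⟨hγ₀, min_le_right _ _⟩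
    | succ n ih =>
      obtain ⟨h1, h2⟩ := ih
      have hs : 0 ≤ Real.sqrt ((γ n)^2 + 4*L*γ n) := Real.sqrt_nonneg _
      have hτn : 0 < τ n := by rw [hτ n]; positivity
      constructor
      · rw [hγ n]
        exact div_pos (by positivity) (by positivity)
      · rw [hγ n, le_div_iff₀ (by positivity)]
        nlinarith [mul_le_mul_of_nonneg_right hmμ hτn.le]
  have hτpos : ∀ i, 0 < τ i := by
    intro i
    have h1 := (hγpos i).1
    have hs : 0 ≤ Real.sqrt ((γ i)^2 + 4*L*γ i) := Real.sqrt_nonneg _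
    rw [hτ i]; positivity
  -- key algebraic identity
  have hLτ : ∀ i, L * τ i ^ 2 = γ i * (1 + τ i) := by
    intro i
    have h1 := (hγpos i).1
    have harg : 0 ≤ (γ i)^2 + 4*L*γ i := by nlinarith
    have hs2 := Real.sq_sqrt harg
    rw [hτ i]
    have hs2' : Real.sqrt (γ i * (γ i + L * 4)) ^ 2 = γ i * (γ i + L * 4) :=
      Real.sq_sqrt (by nlinarith)
    field_simp
    nlinarith [hs2, hs2']
  -- product facts
  have hP1 : ∀ n, 1 ≤ P n := by
    intro n
    have : (1:ℝ) = ∏ _i ∈ Finset.range n, (1:ℝ) := by simp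
    rw [this]
    exact Finset.prod_le_prod (fun i _ => by norm_num)
      (fun i _ => by linarith [hτpos i])
  have hPpos : ∀ n, 0 < P n := fun n => lt_of_lt_of_le one_pos (hP1 n)
  have hPrec : ∀ n, P (n+1) = P n * (1 + τ n) := by
    intro n; simp [hPdef, Finset.prod_range_succ]
  -- γ n * P n ≥ γ₀
  have hγP : ∀ n, γ₀ ≤ γ n * P n := by
    intro n
    induction n with
    | zero => simp [hPdef, hγ0]
    | succ n ih =>
      have hτn := hτpos n
      have hγr : γ (n+1) * (1 + τ n) = γ n + μ * τ n := by
        rw [hγ n]; field_simp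
      have : γ (n+1) * P (n+1) = (γ n + μ * τ n) * P n := by
        rw [hPrec n, ← hγr]; ring
      rw [this]
      nlinarith [hPpos n, mul_nonneg (mul_nonneg hμ hτn.le) (hPpos n).le]
  -- main induction for bound 1
  have hr : 0 < Real.sqrt L := Real.sqrt_pos.2 hL
  have hr2 : Real.sqrt L ^ 2 = L := Real.sq_sqrt hL.le
  have hq : 0 < Real.sqrt γ₀ := Real.sqrt_pos.2 hγ₀
  have hq2 : Real.sqrt γ₀ ^ 2 = γ₀ := Real.sq_sqrt hγ₀.le
  set r := Real.sqrt L
  set q := Real.sqrt γ₀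
  have key : ∀ n : ℕ, 1 + q * n / (2 * r) ≤ Real.sqrt (P n) := by
    intro n
    induction n with
    | zero => simp [hPdef]
    | succ n ih =>
      have hPn := hPpos n
      have hun := hP1 n
      set u := Real.sqrt (P n) with hu
      set v := Real.sqrt (P (n+1)) with hv
      have hu0 : 0 ≤ u := Real.sqrt_nonneg _
      have hv0 : 0 ≤ v := Real.sqrt_nonneg _
      have hu2 : u ^ 2 = P n := Real.sq_sqrt hPn.le
      have hτn := hτpos n
      have hv2 : v ^ 2 = P n * (1 + τ n) := by
        rw [hv, hPrec n, Real.sq_sqrt (by positivity)]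
      have hgn := (hγpos n).1
      -- q * v ≤ r * u^2 * τ n
      have hkey : q * v ≤ r * u ^ 2 * τ n := by
        have hsq : (q * v) ^ 2 ≤ (r * u ^ 2 * τ n) ^ 2 := by
          have h1 : (r * u ^ 2 * τ n) ^ 2 = (L * τ n ^ 2) * (u^2 * u^2) := by
            linear_combination (u^4 * τ n ^ 2) * hr2
          have h2 : (q * v) ^ 2 = γ₀ * (P n * (1 + τ n)) := by
            rw [mul_pow, hq2, hv2]
          rw [h1, h2, hLτ n, hu2]
          have hγPn := hγP n
          nlinarith [hPn, hτn]
        calc q * v = Real.sqrt ((q * v) ^ 2) := (Real.sqrt_sq (by positivity)).symm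
          _ ≤ Real.sqrt ((r * u ^ 2 * τ n) ^ 2) := Real.sqrt_le_sqrt hsq
          _ = r * u ^ 2 * τ n := Real.sqrt_sq (by positivity)
      have huv : u ≤ v := by
        rw [hu, hv]
        apply Real.sqrt_le_sqrt
        rw [hPrec n]
        nlinarith [hPn, hτn]
      have hu1 : (1:ℝ) ≤ u :=
        calc (1:ℝ) = Real.sqrt 1 := Real.sqrt_one.symm
          _ ≤ Real.sqrt (P n) := Real.sqrt_le_sqrt hun
      have hv1 : 1 ≤ v := le_trans hu1 huv
      clear_value u v
      -- r * (v^2 - u^2) = r * u^2 * τ n ≥ q * v, so  v ≥ u + q / (2 r)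
      have hstep : u + q / (2 * r) ≤ v := by
        have hdiff : v ^ 2 - u ^ 2 = u ^ 2 * τ n := by rw [hv2, hu2]; ring
        have h3 : q * v ≤ r * (v ^ 2 - u ^ 2) := by rw [hdiff]; linarith [hkey]
        have hvpos : 0 < v := lt_of_lt_of_le one_pos hv1
        have h6 : q * v ≤ 2 * r * (v - u) * v := by
          nlinarith [h3, mul_nonneg hr.le (sq_nonneg (v - u))]
        have h7 : q ≤ 2 * r * (v - u) := le_of_mul_le_mul_right h6 hvpos
        have h8 : q / (2 * r) ≤ v - u := by
          rw [div_le_iff₀ (by positivity)]; linarith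
        linarith
      have : q * (n+1) / (2*r) = q * n / (2*r) + q / (2*r) := by ring
      push_cast
      rw [this]
      linarith
  -- bound 1
  have hθk : θ k = (P k)⁻¹ := hθ k
  have hX : 0 < 2 * r + q * k := by positivity
  have bound1 : θ k ≤ 4 * L / (2 * r + q * k) ^ 2 := by
    rw [hθk, inv_eq_one_div, div_le_div_iff₀ (hPpos k) (by positivity)]
    have hk := key k
    have hPk : (1 + q * k / (2 * r)) ^ 2 ≤ P k := by
      have h0 : 0 ≤ 1 + q * k / (2*r) := by positivity
      nlinarith [Real.sq_sqrt (hPpos k).le, key k, Real.sqrt_nonneg (P k)]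
    have hexp : (2 * r + q * k) ^ 2 = 4 * L * (1 + q * k / (2*r))^2 := by
      field_simp
      nlinarith [hr2]
    rw [hexp]
    nlinarith [hPk, mul_pos hL (hPpos k)]
  -- bound 2
  set a := Real.sqrt (m / L) with ha
  have ha0 : 0 ≤ a := Real.sqrt_nonneg _
  have hτa : ∀ i, a ≤ τ i := by
    intro i
    have hgi := (hγpos i).1
    have hgm := (hγpos i).2
    have h4 : Real.sqrt (4 * L * m) ≤ Real.sqrt ((γ i)^2 + 4*L*γ i) := by
      apply Real.sqrt_le_sqrt
      nlinarith
    have h5 : Real.sqrt (4 * L * m) = 2 * L * a := by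
      rw [ha, show 4 * L * m = (2*L)^2 * (m/L) by field_simp; ring,
        Real.sqrt_mul (by positivity), Real.sqrt_sq (by positivity)]
    rw [hτ i, le_div_iff₀ (by positivity)]
    nlinarith [h4, h5]
  have bound2 : θ k ≤ ((1 + a)⁻¹) ^ k := by
    rw [hθk, inv_pow]
    apply inv_anti₀ (by positivity)
    calc (1 + a) ^ k = ∏ _i ∈ Finset.range k, (1 + a) := by
          rw [Finset.prod_const, Finset.card_range]
      _ ≤ P k := Finset.prod_le_prod (fun i _ => by positivity)
          (fun i _ => by linarith [hτa i])
  exact le_min bound1 bound2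
end

section
/- Suppose each fⱼ : ℝⁿ → ℝ is differentiable, μⱼ-strongly convex with L-Lipschitz gradient (μ = min μⱼ ≥ 0). Let (γ, X, Z) be a C¹ solution on (0,∞) of γ' = μ - γ, X' = Z - X, γZ' = μ(X - Z) - p where p = Σⱼ λⱼ∇fⱼ(X) for some λ ∈ Δ_m with ⟨∇fⱼ(X) - p, Z - X⟩ ≤ 0 for all j. Then for any fixed z ∈ ℝⁿ the Lyapunov function E(t) = min_j[fⱼ(X(t)) - fⱼ(z)] + (γ(t)/2)‖Z(t) - z‖² satisfies E'(t) ≤ -E(t) - (μ/2)‖Z(t) - X(t)‖² at every t where E is differentiable with E'(t) = ⟨∇f_{i₀}(X(t)), X'(t)⟩ + d/dt[(γ/2)‖Z - z‖²] for some index i₀ attaining the min. -/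
open InnerProductSpace

theorem stmt_17 (n m : ℕ) (hm : (Finset.univ : Finset (Fin m)).Nonempty)
    (f : Fin m → EuclideanSpace ℝ (Fin n) → ℝ)
    (f' : Fin m → EuclideanSpace ℝ (Fin n) → EuclideanSpace ℝ (Fin n))
    (hgrad : ∀ j x, HasGradientAt (f j) (f' j x) x)
    (L : ℝ) (hLip : ∀ j (a b : EuclideanSpace ℝ (Fin n)), ‖f' j a - f' j b‖ ≤ L * ‖a - b‖)
    (μs : Fin m → ℝ) (hμs : ∀ j, 0 ≤ μs j)
    (hsc : ∀ j (x z : EuclideanSpace ℝ (Fin n)),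
      f j x + ⟪f' j x, z - x⟫_ℝ + μs j / 2 * ‖z - x‖ ^ 2 ≤ f j z)
    (μ : ℝ) (hμ : μ = Finset.univ.inf' hm μs)
    (γ : ℝ → ℝ) (X Z : ℝ → EuclideanSpace ℝ (Fin n))
    (z : EuclideanSpace ℝ (Fin n))
    (t : ℝ) (ht : 0 < t) (hγpos : 0 < γ t)
    (hγ' : HasDerivAt γ (μ - γ t) t)
    (hX' : HasDerivAt X (Z t - X t) t)
    (Z't : EuclideanSpace ℝ (Fin n)) (hZ' : HasDerivAt Z Z't t)
    (lam : Fin m → ℝ) (hlam : lam ∈ stdSimplex ℝ (Fin m))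
    (p : EuclideanSpace ℝ (Fin n)) (hp : p = ∑ j, lam j • f' j (X t))
    (hflow : γ t • Z't = μ • (X t - Z t) - p)
    (hproj : ∀ j, ⟪f' j (X t) - p, Z t - X t⟫_ℝ ≤ 0)
    (E : ℝ → ℝ)
    (hE : ∀ s, E s = (Finset.univ.inf' hm fun j => f j (X s) - f j z) +
      γ s / 2 * ‖Z s - z‖ ^ 2)
    (i₀ : Fin m)
    (hi₀ : f i₀ (X t) - f i₀ z = Finset.univ.inf' hm fun j => f j (X t) - f j z)
    (E't : ℝ) (hE' : HasDerivAt E E't t)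
    (hE'eq : E't = ⟪f' i₀ (X t), Z t - X t⟫_ℝ +
      ((μ - γ t) / 2 * ‖Z t - z‖ ^ 2 + γ t * ⟪Z't, Z t - z⟫_ℝ)) :
    E't ≤ -E t - μ / 2 * ‖Z t - X t‖ ^ 2 := by
  have hμ0 : 0 ≤ μ := by
    rw [hμ]; exact Finset.le_inf' hm μs (fun j _ => hμs j)
  have hμle : ∀ j, μ ≤ μs j := by
    intro j; rw [hμ]; exact Finset.inf'_le μs (Finset.mem_univ j)
  set M := Finset.univ.inf' hm fun j => f j (X t) - f j z with hM
  have hMle : ∀ j, M ≤ f j (X t) - f j z := fun j =>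
    Finset.inf'_le _ (Finset.mem_univ j)
  have hpinner : ∀ v : EuclideanSpace ℝ (Fin n),
      ⟪p, v⟫_ℝ = ∑ j, lam j * ⟪f' j (X t), v⟫_ℝ := by
    intro v
    rw [hp, sum_inner]
    simp [real_inner_smul_left, Finset.mul_sum, mul_assoc]
  have hkey : ⟪p, z - X t⟫_ℝ ≤ -M - μ / 2 * ‖z - X t‖ ^ 2 := by
    rw [hpinner]
    have h1 : ∀ j ∈ Finset.univ, lam j * ⟪f' j (X t), z - X t⟫_ℝ ≤
        lam j * (-M - μ / 2 * ‖z - X t‖ ^ 2) := by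
      intro j _
      refine mul_le_mul_of_nonneg_left ?_ (hlam.1 j)
      have h2 := hsc j (X t) z
      have h3 := hMle j
      have h4 := hμle j
      nlinarith [sq_nonneg ‖z - X t‖]
    calc ∑ j, lam j * ⟪f' j (X t), z - X t⟫_ℝ
        ≤ ∑ j, lam j * (-M - μ / 2 * ‖z - X t‖ ^ 2) := Finset.sum_le_sum h1
      _ = -M - μ / 2 * ‖z - X t‖ ^ 2 := by
          rw [← Finset.sum_mul, hlam.2, one_mul]
  have hproj' : ⟪f' i₀ (X t), Z t - X t⟫_ℝ ≤ ⟪p, Z t - X t⟫_ℝ := by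
    have := hproj i₀
    rw [inner_sub_left] at this
    linarith
  have hflow' : γ t * ⟪Z't, Z t - z⟫_ℝ =
      μ * ⟪X t - Z t, Z t - z⟫_ℝ - ⟪p, Z t - z⟫_ℝ := by
    rw [← real_inner_smul_left, hflow, inner_sub_left, real_inner_smul_left]
  -- inner product / norm expansions
  have e1 : ⟪p, Z t - X t⟫_ℝ - ⟪p, Z t - z⟫_ℝ = ⟪p, z - X t⟫_ℝ := by
    rw [← inner_sub_right]
    congr 1
    abel
  set A := ‖Z t - z‖ ^ 2 with hA
  set B := ‖z - X t‖ ^ 2 with hB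
  set C := ⟪Z t - z, X t - z⟫_ℝ with hC
  have e2 : ⟪X t - Z t, Z t - z⟫_ℝ = C - A := by
    have : X t - Z t = (X t - z) - (Z t - z) := by abel
    rw [this, inner_sub_left, real_inner_comm, hA, real_inner_self_eq_norm_sq]
  have e3 : ‖Z t - X t‖ ^ 2 = A - 2 * C + B := by
    have h : Z t - X t = (Z t - z) - (X t - z) := by abel
    rw [h, norm_sub_sq_real, show ‖X t - z‖ = ‖z - X t‖ from norm_sub_rev _ _]
  have hEt : E t = M + γ t / 2 * A := by rw [hE t]
  rw [hE'eq, hflow', e2, hEt, e3]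
  nlinarith [hkey, hproj', e1]
end
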